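/- arXiv:1810.00794 — 4 statements merged into one kernel-verified Lean document; each statement's English description precedes it below -/
import Mathlib

section
/- Let k ≥ 2 and let P_k ⊆ E be the vertex set of the regular 2k-gon inscribed in the unit circle, P_k = {p_j = (cos(jπ/k), sin(jπ/k)) : 0 ≤ j < 2k}. Let R be the configuration of k disks in which the i-th disk (0 ≤ i < k) has center the midpoint of p_{2i} and p_{2i+1} and radius sin(π/(2k)), and let B be the configuration in which the i-th disk has center the midpoint of p_{2i+1} and p_{2i+2 mod 2k} and radius sin(π/(2k)). Then for every continuous morph (γ, ρ) on [0,1] from R to B covering P_k, there exist t ∈ [0,1] and i ∈ Fin k with ρ i t ≥ sin(π/k); equivalently, some disk must grow to at least 2·sin(π(k−1)/(2k)) times the optimal radius sin(π/(2k)). -/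
open Metric Set Real Pointwise

noncomputable section

abbrev E : Type := EuclideanSpace ℝ (Fin 2)

noncomputable def pt (x y : ℝ) : E := !₂[x, y]

/-- A continuous morph on `[0,1]` from configuration `(c0, r0)` to configuration `(c1, r1)`
of `k` balls, covering the point set `P` at all times. -/
def IsMorph {X : Type*} [PseudoMetricSpace X] (k : ℕ) (P : Set X)
    (c0 c1 : Fin k → X) (r0 r1 : Fin k → ℝ)
    (γ : Fin k → ℝ → X) (ρ : Fin k → ℝ → ℝ) : Prop :=
  (∀ i, ContinuousOn (γ i) (Set.Icc 0 1)) ∧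
  (∀ i, ContinuousOn (ρ i) (Set.Icc 0 1)) ∧
  (∀ i, ∀ t ∈ Set.Icc (0:ℝ) 1, 0 ≤ ρ i t) ∧
  (∀ i, γ i 0 = c0 i) ∧
  (∀ i, ρ i 0 = r0 i) ∧
  (∃ σ : Equiv.Perm (Fin k), (∀ i, γ i 1 = c1 (σ i)) ∧ (∀ i, ρ i 1 = r1 (σ i))) ∧
  (∀ t ∈ Set.Icc (0:ℝ) 1, P ⊆ ⋃ i, Metric.closedBall (γ i t) (ρ i t))

/-- The `j`-th vertex of the regular `2k`-gon inscribed in the unit circle. -/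
noncomputable def gonPt (k j : ℕ) : E := !₂[Real.cos (j * π / k), Real.sin (j * π / k)]

/-- The vertex set of the regular `2k`-gon inscribed in the unit circle. -/
def Pgon (k : ℕ) : Set E := {x | ∃ j < 2 * k, x = gonPt k j}

lemma gon_dist (k a b : ℕ) :
    dist (gonPt k a) (gonPt k b) = 2 * |Real.sin (((a:ℝ) - b) * π / (2*k))| := by
  have h : dist (gonPt k a) (gonPt k b)
      = Real.sqrt ((Real.cos (a*π/k) - Real.cos (b*π/k))^2
        + (Real.sin (a*π/k) - Real.sin (b*π/k))^2) := by
    simp [gonPt, EuclideanSpace.dist_eq, Fin.sum_univ_two, Real.dist_eq, sq_abs]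
  set A := (a:ℝ)*π/k
  set B := (b:ℝ)*π/k
  have expand : (Real.cos A - Real.cos B)^2 + (Real.sin A - Real.sin B)^2
      = (2 * |Real.sin ((A - B)/2)|)^2 := by
    rw [mul_pow, sq_abs]
    have h2 : Real.cos (A - B) = Real.cos (2 * ((A-B)/2)) := by ring_nf
    have h3 := Real.cos_two_mul' ((A-B)/2)
    have h4 := Real.sin_sq_add_cos_sq ((A-B)/2)
    have h5 := Real.sin_sq_add_cos_sq A
    have h6 := Real.sin_sq_add_cos_sq B
    have h7 := Real.cos_sub A B
    nlinarith [h2, h3, h4, h5, h6, h7]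
  rw [h, expand, Real.sqrt_sq (by positivity)]
  have heq : (A - B)/2 = ((a:ℝ) - b) * π / (2*k) := by simp only [A, B]; ring
  rw [heq]

lemma sin_lb {k : ℕ} (hk : 2 ≤ k) {x : ℝ} (h1 : π/k ≤ x) (h2 : x ≤ π - π/k) :
    Real.sin (π/k) ≤ Real.sin x := by
  have hk2 : (2:ℝ) ≤ k := by exact_mod_cast hk
  have hc1 : 0 < π/k := by positivity
  have hc2 : π/(k:ℝ) ≤ π/2 := by gcongr
  have mono := Real.strictMonoOn_sin.monotoneOn
  have hpi := pi_pos
  rcases le_total x (π/2) with hx | hx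
  · exact mono ⟨by linarith, hc2⟩ ⟨by linarith, hx⟩ h1
  · rw [← Real.sin_pi_sub x]
    exact mono ⟨by linarith, hc2⟩ ⟨by linarith, by linarith⟩ (by linarith)

lemma gon_dist_adj (k j : ℕ) (hk : 1 ≤ k) :
    dist (gonPt k j) (gonPt k (j+1)) = 2 * Real.sin (π/(2*k)) := by
  rw [gon_dist]
  have h1 : ((j:ℝ) - ((j:ℕ)+1:ℕ)) * π / (2*k) = -(π/(2*k)) := by push_cast; ring
  rw [h1, Real.sin_neg, abs_neg, abs_of_nonneg]
  apply Real.sin_nonneg_of_nonneg_of_le_pi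
  · positivity
  · apply div_le_self pi_pos.le
    have : (1:ℝ) ≤ k := by exact_mod_cast hk
    linarith

lemma gon_sep {k a b : ℕ} (hk : 2 ≤ k) (hab : a < b) (hb : b < 2*k)
    (h1 : b - a ≠ 1) (h2 : b - a ≠ 2*k - 1) :
    2 * Real.sin (π/k) ≤ dist (gonPt k a) (gonPt k b) := by
  rw [gon_dist]
  have hm1 : 2 ≤ b - a := by omega
  set m := b - a with hm
  have hmr : (m:ℝ) = (b:ℝ) - (a:ℝ) := by rw [hm, Nat.cast_sub hab.le]
  have hcast : ((a:ℝ) - b) * π / (2*k) = -((m:ℝ) * π / (2*k)) := by rw [hmr]; ring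
  have hm1' : (2:ℝ) ≤ m := by exact_mod_cast hm1
  have hm2' : (m:ℝ) + 2 ≤ 2*k := by exact_mod_cast (by omega : m + 2 ≤ 2*k)
  have hkpos : (0:ℝ) < k := by positivity
  have hpi := pi_pos
  rw [hcast, Real.sin_neg, abs_neg, abs_of_nonneg]
  · have h3 : Real.sin (π/k) ≤ Real.sin ((m:ℝ)*π/(2*k)) := by
      apply sin_lb hk
      · calc π/(k:ℝ) = 2*π/(2*k) := by ring
          _ ≤ (m:ℝ)*π/(2*k) := by gcongr
      · rw [div_le_iff₀ (by positivity : (0:ℝ) < 2*(k:ℝ))]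
        have he : (π - π/k) * (2*(k:ℝ)) = 2*k*π - 2*π := by field_simp
        rw [he]; nlinarith
    linarith
  · apply Real.sin_nonneg_of_nonneg_of_le_pi
    · positivity
    · rw [div_le_iff₀ (by positivity : (0:ℝ) < 2*(k:ℝ))]; nlinarith

lemma gon_close {k a b : ℕ} (hk : 2 ≤ k) (ha : a < 2*k) (hb : b < 2*k)
    (h : dist (gonPt k a) (gonPt k b) < 2 * Real.sin (π/k)) :
    a = b ∨ b = a + 1 ∨ a = b + 1 ∨ (a = 0 ∧ b = 2*k - 1) ∨ (b = 0 ∧ a = 2*k - 1) := by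
  by_contra hcon
  push_neg at hcon
  rcases Nat.lt_or_ge a b with hab | hab
  · have := gon_sep hk hab hb (by omega) (by omega)
    linarith
  · have hba : b < a := by omega
    have := gon_sep hk hba ha (by omega) (by omega)
    rw [dist_comm] at this
    linarith

lemma fibers {k : ℕ} (hk : 0 < k) (f : Fin (2*k) → Fin k)
    (hfib : ∀ i : Fin k, (Finset.univ.filter (fun j => f j = i)).card ≤ 2) :
    ∀ j, ∃ y, y ≠ j ∧ f y = f j := by
  have hsum : ∑ i : Fin k, (Finset.univ.filter (fun j => f j = i)).card = 2*k := by
    rw [← Finset.card_eq_sum_card_fiberwise (fun x _ => Finset.mem_univ (f x))]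
    simp
  have hall : ∀ i, (Finset.univ.filter (fun j => f j = i)).card = 2 := by
    by_contra hc
    push_neg at hc
    obtain ⟨i0, hi0⟩ := hc
    have hlt : (Finset.univ.filter (fun j => f j = i0)).card < 2 :=
      lt_of_le_of_ne (hfib i0) hi0
    have hs : ∑ i : Fin k, (Finset.univ.filter (fun j => f j = i)).card
        < ∑ _i : Fin k, 2 :=
      Finset.sum_lt_sum (fun i _ => hfib i) ⟨i0, Finset.mem_univ i0, hlt⟩
    rw [hsum] at hs
    simp [Finset.sum_const, Finset.card_univ] at hs
    omega
  intro j
  have h1 : 1 < (Finset.univ.filter (fun y => f y = f j)).card := by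
    rw [hall]; norm_num
  obtain ⟨y, hy, hyne⟩ := Finset.exists_mem_ne h1 j
  exact ⟨y, hyne, (Finset.mem_filter.mp hy).2⟩

lemma key {k : ℕ} (hk : 2 ≤ k) (c : Fin k → E) (r : Fin k → ℝ)
    (hr : ∀ i, r i < Real.sin (π/k))
    (f : Fin (2*k) → Fin k)
    (hp : ∀ j : Fin (2*k), dist (gonPt k j) (c (f j)) ≤ r (f j)) :
    ∀ j, ∃ y, y ≠ j ∧ f y = f j := by
  apply fibers (by omega)
  intro i
  by_contra hc
  push_neg at hc
  rw [Finset.two_lt_card_iff] at hc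
  obtain ⟨x, y, z, hx, hy, hz, hxy, hxz, hyz⟩ := hc
  have hxm := (Finset.mem_filter.mp hx).2
  have hym := (Finset.mem_filter.mp hy).2
  have hzm := (Finset.mem_filter.mp hz).2
  have close : ∀ u v : Fin (2*k), f u = i → f v = i →
      dist (gonPt k u) (gonPt k v) < 2 * Real.sin (π/k) := by
    intro u v hu hv
    have h1 := hp u; rw [hu] at h1
    have h2 := hp v; rw [hv] at h2
    have := hr i
    calc dist (gonPt k u) (gonPt k v)
        ≤ dist (gonPt k u) (c i) + dist (gonPt k v) (c i) := dist_triangle_right _ _ _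
      _ < 2 * Real.sin (π/k) := by linarith
  have c1 := gon_close hk x.isLt y.isLt (close x y hxm hym)
  have c2 := gon_close hk y.isLt z.isLt (close y z hym hzm)
  have c3 := gon_close hk x.isLt z.isLt (close x z hxm hzm)
  have hxy' : (x:ℕ) ≠ y := fun h => hxy (Fin.ext h)
  have hxz' : (x:ℕ) ≠ z := fun h => hxz (Fin.ext h)
  have hyz' : (y:ℕ) ≠ z := fun h => hyz (Fin.ext h)
  omega

lemma closed_part (q q' : E) (g : ℝ → E) (r : ℝ → ℝ)
    (hg : ContinuousOn g (Set.Icc 0 1)) (hr : ContinuousOn r (Set.Icc 0 1)) :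
    IsClosed {t : ℝ | t ∈ Set.Icc (0:ℝ) 1 ∧ dist q (g t) ≤ r t ∧ dist q' (g t) ≤ r t} := by
  have h1 : ContinuousOn (fun t => dist q (g t) - r t) (Set.Icc 0 1) :=
    ((continuous_const.dist continuous_id).comp_continuousOn hg).sub hr
  have h2 : ContinuousOn (fun t => dist q' (g t) - r t) (Set.Icc 0 1) :=
    ((continuous_const.dist continuous_id).comp_continuousOn hg).sub hr
  have he : {t : ℝ | t ∈ Set.Icc (0:ℝ) 1 ∧ dist q (g t) ≤ r t ∧ dist q' (g t) ≤ r t}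
      = ((Set.Icc (0:ℝ) 1) ∩ (fun t => dist q (g t) - r t) ⁻¹' (Set.Iic 0))
        ∩ ((Set.Icc (0:ℝ) 1) ∩ (fun t => dist q' (g t) - r t) ⁻¹' (Set.Iic 0)) := by
    ext t
    simp only [Set.mem_setOf_eq, Set.mem_inter_iff, Set.mem_preimage, Set.mem_Iic, sub_nonpos]
    tauto
  rw [he]
  exact (h1.preimage_isClosed_of_isClosed isClosed_Icc isClosed_Iic).inter
    (h2.preimage_isClosed_of_isClosed isClosed_Icc isClosed_Iic)

lemma time_dichotomy {k : ℕ} (hk : 2 ≤ k) (c : Fin k → E) (r : Fin k → ℝ)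
    (hr : ∀ i, r i < Real.sin (π/k))
    (hcov : ∀ j, j < 2*k → ∃ i, dist (gonPt k j) (c i) ≤ r i) :
    ∃ i, (dist (gonPt k 0) (c i) ≤ r i ∧ dist (gonPt k 1) (c i) ≤ r i)
       ∨ (dist (gonPt k 1) (c i) ≤ r i ∧ dist (gonPt k 2) (c i) ≤ r i) := by
  choose f hf using (fun j : Fin (2*k) => hcov j j.isLt)
  have h4 : 4 ≤ 2*k := by omega
  obtain ⟨y, hyne, hyf⟩ := key hk c r hr f hf ⟨1, by omega⟩
  have hy1 : dist (gonPt k y) (gonPt k 1) < 2 * Real.sin (π/k) := by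
    have h1 : dist (gonPt k 1) (c (f ⟨1, by omega⟩)) ≤ r (f ⟨1, by omega⟩) := hf ⟨1, by omega⟩
    have h2 := hf y
    rw [hyf] at h2
    have := hr (f ⟨1, by omega⟩)
    calc dist (gonPt k y) (gonPt k 1)
        ≤ dist (gonPt k y) (c (f ⟨1, by omega⟩)) + dist (gonPt k 1) (c (f ⟨1, by omega⟩)) :=
          dist_triangle_right _ _ _
      _ < 2 * Real.sin (π/k) := by linarith
  have hcl := gon_close hk y.isLt (show 1 < 2*k by omega) hy1
  have hyv : (y:ℕ) ≠ 1 := fun hv => hyne (Fin.ext hv)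
  have hy02 : (y:ℕ) = 0 ∨ (y:ℕ) = 2 := by omega
  refine ⟨f ⟨1, by omega⟩, ?_⟩
  have h2 := hf y
  rw [hyf] at h2
  rcases hy02 with hy0 | hy2
  · left
    refine ⟨?_, hf ⟨1, by omega⟩⟩
    rwa [hy0] at h2
  · right
    refine ⟨hf ⟨1, by omega⟩, ?_⟩
    rwa [hy2] at h2

set_option maxHeartbeats 2000000 in
lemma time_exclusion {k : ℕ} (hk : 2 ≤ k) (c : Fin k → E) (r : Fin k → ℝ)
    (hr : ∀ i, r i < Real.sin (π/k))
    (hcov : ∀ j, j < 2*k → ∃ i, dist (gonPt k j) (c i) ≤ r i)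
    (A B : Fin k)
    (hA0 : dist (gonPt k 0) (c A) ≤ r A) (hA1 : dist (gonPt k 1) (c A) ≤ r A)
    (hB1 : dist (gonPt k 1) (c B) ≤ r B) (hB2 : dist (gonPt k 2) (c B) ≤ r B) : False := by
  have hAB : A ≠ B := by
    rintro rfl
    have hsep := gon_sep (a := 0) (b := 2) hk (by omega) (by omega) (by omega) (by omega)
    have htri := dist_triangle_right (gonPt k 0) (gonPt k 2) (c A)
    have := hr A
    linarith
  choose f0 hf0 using (fun j : Fin (2*k) => hcov j j.isLt)
  classical
  have h4 : 4 ≤ 2*k := by omega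
  set f : Fin (2*k) → Fin k :=
    fun j => if (j:ℕ) = 0 ∨ (j:ℕ) = 1 then A else if (j:ℕ) = 2 then B else f0 j with hfdef
  have hfA : ∀ j : Fin (2*k), ((j:ℕ) = 0 ∨ (j:ℕ) = 1) → f j = A := by
    intro j hj; rw [hfdef]; exact if_pos hj
  have hfB : ∀ j : Fin (2*k), ¬((j:ℕ) = 0 ∨ (j:ℕ) = 1) → (j:ℕ) = 2 → f j = B := by
    intro j hj hj2; rw [hfdef]; simp only [if_neg hj, if_pos hj2]
  have hfO : ∀ j : Fin (2*k), ¬((j:ℕ) = 0 ∨ (j:ℕ) = 1) → (j:ℕ) ≠ 2 → f j = f0 j := by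
    intro j hj hj2; rw [hfdef]; simp only [if_neg hj, if_neg hj2]
  have hp : ∀ j : Fin (2*k), dist (gonPt k j) (c (f j)) ≤ r (f j) := by
    intro j
    by_cases h01 : (j:ℕ) = 0 ∨ (j:ℕ) = 1
    · rw [hfA j h01]
      rcases h01 with hv | hv <;> rw [hv] <;> assumption
    · by_cases h2 : (j:ℕ) = 2
      · rw [hfB j h01 h2, h2]
        exact hB2
      · rw [hfO j h01 h2]
        exact hf0 j
  obtain ⟨y, hyne, hyf⟩ := key hk c r hr f hp ⟨2, by omega⟩
  have hfj2 : f (⟨2, by omega⟩ : Fin (2*k)) = B := hfB _ (by norm_num) rfl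
  have hyB : dist (gonPt k y) (c B) ≤ r B := by
    have := hp y
    rwa [hyf, hfj2] at this
  have hy1 : dist (gonPt k y) (gonPt k 1) < 2 * Real.sin (π/k) := by
    have := hr B
    calc dist (gonPt k y) (gonPt k 1)
        ≤ dist (gonPt k y) (c B) + dist (gonPt k 1) (c B) := dist_triangle_right _ _ _
      _ < 2 * Real.sin (π/k) := by linarith
  have hcl := gon_close hk y.isLt (show 1 < 2*k by omega) hy1
  have hyv : (y:ℕ) ≠ 2 := fun hv => hyne (Fin.ext hv)
  have hy01 : (y:ℕ) = 0 ∨ (y:ℕ) = 1 := by omega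
  have hfy : f y = A := hfA y hy01
  rw [hyf, hfj2] at hfy
  exact hAB hfy.symm

theorem gon_morph_needs_large_radius
    (k : ℕ) (hk : 2 ≤ k)
    (γ : Fin k → ℝ → E) (ρ : Fin k → ℝ → ℝ)
    (h : IsMorph k (Pgon k)
      (fun i => midpoint ℝ (gonPt k (2 * (i:ℕ))) (gonPt k (2 * (i:ℕ) + 1)))
      (fun i => midpoint ℝ (gonPt k (2 * (i:ℕ) + 1)) (gonPt k ((2 * (i:ℕ) + 2) % (2 * k))))
      (fun _ => Real.sin (π / (2 * k))) (fun _ => Real.sin (π / (2 * k))) γ ρ) :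
    ∃ t ∈ Set.Icc (0:ℝ) 1, ∃ i, Real.sin (π / k) ≤ ρ i t := by
  by_contra hcon
  push_neg at hcon
  obtain ⟨hγ, hρ, hρ0, hc0, hr0, ⟨σ, hσc, hσr⟩, hcov⟩ := h
  have hk1 : 1 ≤ k := by omega
  have hcov' : ∀ t ∈ Set.Icc (0:ℝ) 1, ∀ j, j < 2*k → ∃ i, dist (gonPt k j) (γ i t) ≤ ρ i t := by
    intro t ht j hj
    have hmem := hcov t ht ⟨j, hj, rfl⟩
    rw [Set.mem_iUnion] at hmem
    obtain ⟨i, hi⟩ := hmem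
    exact ⟨i, by rwa [Metric.mem_closedBall] at hi⟩
  set U : Set ℝ := ⋃ i, {t : ℝ | t ∈ Set.Icc (0:ℝ) 1 ∧
    dist (gonPt k 0) (γ i t) ≤ ρ i t ∧ dist (gonPt k 1) (γ i t) ≤ ρ i t} with hU
  set V : Set ℝ := ⋃ i, {t : ℝ | t ∈ Set.Icc (0:ℝ) 1 ∧
    dist (gonPt k 1) (γ i t) ≤ ρ i t ∧ dist (gonPt k 2) (γ i t) ≤ ρ i t} with hV
  have hUc : IsClosed U :=
    isClosed_iUnion_of_finite fun i => closed_part _ _ _ _ (hγ i) (hρ i)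
  have hVc : IsClosed V :=
    isClosed_iUnion_of_finite fun i => closed_part _ _ _ _ (hγ i) (hρ i)
  have hcover : Set.Icc (0:ℝ) 1 ⊆ U ∪ V := by
    intro t ht
    obtain ⟨i, hi⟩ := time_dichotomy hk (fun i => γ i t) (fun i => ρ i t)
      (fun i => hcon t ht i) (hcov' t ht)
    rcases hi with ⟨h1, h2⟩ | ⟨h1, h2⟩
    · exact Or.inl (Set.mem_iUnion.mpr ⟨i, ht, h1, h2⟩)
    · exact Or.inr (Set.mem_iUnion.mpr ⟨i, ht, h1, h2⟩)
  have h0I : (0:ℝ) ∈ Set.Icc (0:ℝ) 1 := ⟨le_refl 0, zero_le_one⟩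
  have h1I : (1:ℝ) ∈ Set.Icc (0:ℝ) 1 := ⟨zero_le_one, le_refl 1⟩
  have hd01 : dist (gonPt k 0) (gonPt k 1) = 2 * Real.sin (π/(2*k)) := gon_dist_adj k 0 hk1
  have hd12 : dist (gonPt k 1) (gonPt k 2) = 2 * Real.sin (π/(2*k)) := gon_dist_adj k 1 hk1
  have h0U : (0:ℝ) ∈ U := by
    rw [hU]
    refine Set.mem_iUnion.mpr ⟨⟨0, by omega⟩, h0I, ?_, ?_⟩
    · rw [hc0 ⟨0, by omega⟩, hr0 ⟨0, by omega⟩]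
      show dist (gonPt k 0) (midpoint ℝ (gonPt k 0) (gonPt k 1)) ≤ Real.sin (π / (2*k))
      rw [dist_left_midpoint, hd01]
      rw [Real.norm_two]
      linarith [Real.sin_nonneg_of_nonneg_of_le_pi (x := π/(2*(k:ℝ)))
        (by positivity) (div_le_self Real.pi_pos.le (by exact_mod_cast (by omega : 1 ≤ 2*k)))]
    · rw [hc0 ⟨0, by omega⟩, hr0 ⟨0, by omega⟩]
      show dist (gonPt k 1) (midpoint ℝ (gonPt k 0) (gonPt k 1)) ≤ Real.sin (π / (2*k))
      rw [dist_right_midpoint, hd01, Real.norm_two]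
      linarith [Real.sin_nonneg_of_nonneg_of_le_pi (x := π/(2*(k:ℝ)))
        (by positivity) (div_le_self Real.pi_pos.le (by exact_mod_cast (by omega : 1 ≤ 2*k)))]
  have h1V : (1:ℝ) ∈ V := by
    rw [hV]
    set i1 : Fin k := σ.symm ⟨0, by omega⟩ with hi1
    have hσi1 : σ i1 = ⟨0, by omega⟩ := Equiv.apply_symm_apply σ _
    have hγ1 : γ i1 1 = midpoint ℝ (gonPt k 1) (gonPt k (2 % (2*k))) := by
      rw [hσc i1, hσi1]
      norm_num
    have hmod : 2 % (2*k) = 2 := Nat.mod_eq_of_lt (by omega)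
    rw [hmod] at hγ1
    refine Set.mem_iUnion.mpr ⟨i1, h1I, ?_, ?_⟩
    · rw [hγ1, hσr i1, dist_left_midpoint, hd12, Real.norm_two]
      linarith [Real.sin_nonneg_of_nonneg_of_le_pi (x := π/(2*(k:ℝ)))
        (by positivity) (div_le_self Real.pi_pos.le (by exact_mod_cast (by omega : 1 ≤ 2*k)))]
    · rw [hγ1, hσr i1, dist_right_midpoint, hd12, Real.norm_two]
      linarith [Real.sin_nonneg_of_nonneg_of_le_pi (x := π/(2*(k:ℝ)))
        (by positivity) (div_le_self Real.pi_pos.le (by exact_mod_cast (by omega : 1 ≤ 2*k)))]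
  obtain ⟨t, htI, htU, htV⟩ := (isPreconnected_closed_iff.mp isPreconnected_Icc) U V hUc hVc
    hcover ⟨0, h0I, h0U⟩ ⟨1, h1I, h1V⟩
  obtain ⟨A, hAI, hA0, hA1⟩ := Set.mem_iUnion.mp htU
  obtain ⟨B, hBI, hB1, hB2⟩ := Set.mem_iUnion.mp htV
  exact time_exclusion hk (fun i => γ i t) (fun i => ρ i t)
    (fun i => hcon t htI i) (hcov' t htI) A B hA0 hA1 hB1 hB2
end
end

section
/- Let E = EuclideanSpace ℝ (Fin 2), let P ⊆ E be a finite point set, let k ≥ 2, and let C ≥ 0. Let R = (c⁰, r⁰) and B = (c¹, r¹) be two configurations of k disks, each covering P, with r⁰ i ≤ C and r¹ i ≤ C for all i. Then there exists a continuous morph (γ, ρ) on [0,1] from R to B covering P such that ρ i t ≤ 2C for all i ∈ Fin k and all t ∈ [0,1]. (Hence the topological stability ratio of the minmax Euclidean k-center problem is at most 2.) -/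
open Metric Set Real Pointwise

noncomputable section

namespace MorphAux

lemma dist_interp {p x y : E} {s u t : ℝ} (h0 : 0 ≤ t) (h1 : t ≤ 1)
    (hx : dist p x ≤ s) (hy : dist p y ≤ u) :
    dist p (x + t • (y - x)) ≤ s + t * (u - s) := by
  have key : p - (x + t • (y - x)) = (1 - t) • (p - x) + t • (p - y) := by module
  have h2 : dist p (x + t • (y - x)) ≤ (1 - t) * dist p x + t * dist p y := by
    rw [dist_eq_norm, key, dist_eq_norm, dist_eq_norm]
    calc ‖(1 - t) • (p - x) + t • (p - y)‖ ≤ ‖(1 - t) • (p - x)‖ + ‖t • (p - y)‖ :=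
          norm_add_le _ _
      _ = (1 - t) * ‖p - x‖ + t * ‖p - y‖ := by
          rw [norm_smul, norm_smul, Real.norm_of_nonneg (by linarith), Real.norm_of_nonneg h0]
  nlinarith [dist_nonneg (x := p) (y := x), dist_nonneg (x := p) (y := y)]

/-- A good morph (no permutation) between configurations `A` and `B`. -/
def GM {k : ℕ} (P : Set E) (C : ℝ) (A B : Fin k → E × ℝ) : Prop :=
  ∃ γ : Fin k → ℝ → E, ∃ ρ : Fin k → ℝ → ℝ,
    (∀ i, Continuous (γ i)) ∧ (∀ i, Continuous (ρ i)) ∧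
    (∀ i, ∀ t ∈ Set.Icc (0:ℝ) 1, 0 ≤ ρ i t ∧ ρ i t ≤ 2*C) ∧
    (∀ i, γ i 0 = (A i).1) ∧ (∀ i, ρ i 0 = (A i).2) ∧
    (∀ i, γ i 1 = (B i).1) ∧ (∀ i, ρ i 1 = (B i).2) ∧
    (∀ t ∈ Set.Icc (0:ℝ) 1, P ⊆ ⋃ i, Metric.closedBall (γ i t) (ρ i t))

lemma GM_linear {k : ℕ} {P : Set E} {C : ℝ} {A B : Fin k → E × ℝ}
    (hA : ∀ i, (A i).2 ∈ Set.Icc 0 (2*C)) (hB : ∀ i, (B i).2 ∈ Set.Icc 0 (2*C))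
    (hcov : ∀ p ∈ P, ∃ i, dist p (A i).1 ≤ (A i).2 ∧ dist p (B i).1 ≤ (B i).2) :
    GM P C A B := by
  refine ⟨fun i t => (A i).1 + t • ((B i).1 - (A i).1),
          fun i t => (A i).2 + t * ((B i).2 - (A i).2), ?_, ?_, ?_, ?_, ?_, ?_, ?_, ?_⟩
  · intro i; exact continuous_const.add (continuous_id.smul continuous_const)
  · intro i; fun_prop
  · intro i t ht
    obtain ⟨h0, h1⟩ := ht
    obtain ⟨ha0, ha1⟩ := hA i; obtain ⟨hb0, hb1⟩ := hB i
    dsimp only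
    constructor <;> nlinarith
  · intro i; simp
  · intro i; simp
  · intro i; simp
  · intro i; ring
  · intro t ht p hp
    obtain ⟨i, hx, hy⟩ := hcov p hp
    refine Set.mem_iUnion.mpr ⟨i, ?_⟩
    rw [Metric.mem_closedBall]
    exact dist_interp ht.1 ht.2 hx hy

lemma GM_refl {k : ℕ} {P : Set E} {C : ℝ} {A : Fin k → E × ℝ}
    (hA : ∀ i, (A i).2 ∈ Set.Icc 0 (2*C))
    (hcov : ∀ p ∈ P, ∃ i, dist p (A i).1 ≤ (A i).2) : GM P C A A :=
  GM_linear hA hA (fun p hp => (hcov p hp).elim (fun i h => ⟨i, h, h⟩))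

lemma GM_trans {k : ℕ} {P : Set E} {C : ℝ} {A B D : Fin k → E × ℝ}
    (h1 : GM P C A B) (h2 : GM P C B D) : GM P C A D := by
  classical
  obtain ⟨γ1, ρ1, c1γ, c1ρ, b1, s1γ, s1ρ, e1γ, e1ρ, cov1⟩ := h1
  obtain ⟨γ2, ρ2, c2γ, c2ρ, b2, s2γ, s2ρ, e2γ, e2ρ, cov2⟩ := h2
  refine ⟨fun i t => if t ≤ 1/2 then γ1 i (2*t) else γ2 i (2*t - 1),
          fun i t => if t ≤ 1/2 then ρ1 i (2*t) else ρ2 i (2*t - 1), ?_, ?_, ?_, ?_, ?_, ?_, ?_, ?_⟩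
  · intro i
    refine Continuous.if_le ((c1γ i).comp (by fun_prop)) ((c2γ i).comp (by fun_prop))
      continuous_id continuous_const ?_
    intro t ht; rw [ht]; norm_num [e1γ, s2γ]
  · intro i
    refine Continuous.if_le ((c1ρ i).comp (by fun_prop)) ((c2ρ i).comp (by fun_prop))
      continuous_id continuous_const ?_
    intro t ht; rw [ht]; norm_num [e1ρ, s2ρ]
  · intro i t ht
    obtain ⟨h0, h1⟩ := ht
    by_cases h : t ≤ 1/2
    · simp only [if_pos h]; exact b1 i (2*t) ⟨by linarith, by linarith⟩
    · simp only [if_neg h]; push_neg at h; exact b2 i (2*t-1) ⟨by linarith, by linarith⟩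
  · intro i; norm_num [s1γ]
  · intro i; norm_num [s1ρ]
  · intro i; norm_num [e2γ]
  · intro i; norm_num [e2ρ]
  · intro t ht
    obtain ⟨h0, h1⟩ := ht
    by_cases h : t ≤ 1/2
    · simp only [if_pos h]; exact cov1 (2*t) ⟨by linarith, by linarith⟩
    · simp only [if_neg h]; push_neg at h; exact cov2 (2*t-1) ⟨by linarith, by linarith⟩


/-- State of the hand-over process: `none` = disk still at its initial position,
`some (j, x, r)` = disk serves final position `j`, currently at `(x, r)`. -/
abbrev St (k : ℕ) := Fin k → Option (Fin k × E × ℝ)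

def cfg {k : ℕ} (c0 : Fin k → E) (r0 : Fin k → ℝ) (st : St k) (i : Fin k) : E × ℝ :=
  (st i).elim (c0 i, r0 i) (fun z => (z.2.1, z.2.2))

structure Hyp {k : ℕ} (C : ℝ) (c0 c1 : Fin k → E) (r0 r1 : Fin k → ℝ)
    (P : Set E) (a b : E → Fin k) : Prop where
  hC : 0 ≤ C
  hr0 : ∀ i, 0 ≤ r0 i
  hB0 : ∀ i, r0 i ≤ C
  hr1 : ∀ i, 0 ≤ r1 i
  hB1 : ∀ i, r1 i ≤ C
  ha : ∀ p ∈ P, dist p (c0 (a p)) ≤ r0 (a p)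
  hb : ∀ p ∈ P, dist p (c1 (b p)) ≤ r1 (b p)

def I1 {k : ℕ} (st : St k) : Prop :=
  ∀ ⦃i i' j x r x' r'⦄, st i = some (j, x, r) → st i' = some (j, x', r') → i = i'

def I2 {k : ℕ} (C : ℝ) (c1 : Fin k → E) (r1 : Fin k → ℝ) (st : St k) : Prop :=
  ∀ ⦃i j x r⦄, st i = some (j, x, r) →
    (x = c1 j ∧ r = r1 j) ∨ (dist x (c1 j) ≤ r1 j ∧ r = 2*C)

def I3 {k : ℕ} (C : ℝ) (c0 : Fin k → E) (r0 : Fin k → ℝ) (P : Set E)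
    (a b : E → Fin k) (st : St k) : Prop :=
  ∀ p ∈ P, st (a p) = none ∨
    (∃ j x, st (a p) = some (j, x, 2*C) ∧ dist x (c0 (a p)) ≤ r0 (a p)) ∨
    (∃ i y r, st i = some (b p, y, r))

lemma ncard_le_k {k : ℕ} (S : Set (Fin k)) : S.ncard ≤ k := by
  have h := Set.ncard_le_ncard (Set.subset_univ S) (Set.toFinite _)
  rwa [Set.ncard_univ, Nat.card_eq_fintype_card, Fintype.card_fin] at h

section Main

variable {k : ℕ} {C : ℝ} {c0 c1 : Fin k → E} {r0 r1 : Fin k → ℝ} {P : Set E} {a b : E → Fin k}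

lemma rad_mem (H : Hyp C c0 c1 r0 r1 P a b) {st : St k} (h2 : I2 C c1 r1 st) (i : Fin k) :
    (cfg c0 r0 st i).2 ∈ Set.Icc 0 (2*C) := by
  rcases hst : st i with _ | ⟨j, x, r⟩
  · simp only [cfg, hst, Option.elim]
    exact ⟨H.hr0 i, by linarith [H.hB0 i, H.hC]⟩
  · rcases h2 hst with ⟨_, rfl⟩ | ⟨_, rfl⟩ <;> simp only [cfg, hst, Option.elim]
    · exact ⟨H.hr1 j, by linarith [H.hB1 j, H.hC]⟩
    · exact ⟨by linarith [H.hC], le_refl _⟩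

lemma park_covers (H : Hyp C c0 c1 r0 r1 P a b) {st : St k} (h2 : I2 C c1 r1 st)
    {i j x r} (h : st i = some (j, x, r)) {p : E} (hp : dist p (c1 j) ≤ r1 j) :
    dist p x ≤ r := by
  rcases h2 h with ⟨rfl, rfl⟩ | ⟨hd, rfl⟩
  · exact hp
  · calc dist p x ≤ dist p (c1 j) + dist (c1 j) x := dist_triangle _ _ _
      _ ≤ r1 j + r1 j := add_le_add hp (by rw [dist_comm]; exact hd)
      _ ≤ 2*C := by linarith [H.hB1 j]

lemma cov_witness (H : Hyp C c0 c1 r0 r1 P a b) {st : St k}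
    (h2 : I2 C c1 r1 st) (h3 : I3 C c0 r0 P a b st) {p : E} (hp : p ∈ P) :
    ∃ i, dist p (cfg c0 r0 st i).1 ≤ (cfg c0 r0 st i).2 ∧ (i = a p ∨ st i ≠ none) := by
  rcases h3 p hp with h | ⟨j, x, hx, hd⟩ | ⟨i, y, r, hi⟩
  · refine ⟨a p, ?_, Or.inl rfl⟩
    simp only [cfg, h, Option.elim]
    exact H.ha p hp
  · refine ⟨a p, ?_, Or.inl rfl⟩
    simp only [cfg, hx, Option.elim]
    calc dist p x ≤ dist p (c0 (a p)) + dist (c0 (a p)) x := dist_triangle _ _ _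
      _ ≤ r0 (a p) + r0 (a p) := add_le_add (H.ha p hp) (by rw [dist_comm]; exact hd)
      _ ≤ 2*C := by linarith [H.hB0 (a p)]
  · refine ⟨i, ?_, Or.inr (by simp [hi])⟩
    simp only [cfg, hi, Option.elim]
    exact park_covers H h2 hi (H.hb p hp)

lemma exists_unparked {st : St k} {i₀ : Fin k} (h : st i₀ = none) :
    ∃ j, ∀ i x r, st i ≠ some (j, x, r) := by
  by_contra hc
  push_neg at hc
  choose f x r hf using hc
  have hinj : Function.Injective f := by
    intro j j' e
    have h1 := hf j
    rw [e] at h1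
    have := h1.symm.trans (hf j')
    simp only [Option.some.injEq, Prod.mk.injEq] at this
    exact this.1
  obtain ⟨j, hj⟩ := Finite.injective_iff_surjective.mp hinj i₀
  have := hf j
  rw [hj, h] at this
  cases this

lemma phase1 (H : Hyp C c0 c1 r0 r1 P a b) :
    ∀ n (st : St k), I1 st → I2 C c1 r1 st → I3 C c0 r0 P a b st →
      {i | st i = none}.ncard ≤ n →
      ∃ st', I1 st' ∧ I2 C c1 r1 st' ∧ I3 C c0 r0 P a b st' ∧ (∀ i, st' i ≠ none) ∧
        GM P C (cfg c0 r0 st) (cfg c0 r0 st') := by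
  intro n
  induction n with
  | zero =>
    intro st h1 h2 h3 hcard
    have hempty : {i | st i = none} = ∅ :=
      (Set.ncard_eq_zero (Set.toFinite _)).mp (Nat.le_zero.mp hcard)
    have hall : ∀ i, st i ≠ none := by
      intro i hi
      exact absurd (hempty ▸ (hi : i ∈ {i | st i = none}) : i ∈ (∅ : Set (Fin k))) (Set.notMem_empty i)
    exact ⟨st, h1, h2, h3, hall,
      GM_refl (rad_mem H h2) (fun p hp => (cov_witness H h2 h3 hp).elim fun i h => ⟨i, h.1⟩)⟩
  | succ n ih =>
    intro st h1 h2 h3 hcard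
    by_cases hall : ∀ i, st i ≠ none
    · exact ⟨st, h1, h2, h3, hall,
        GM_refl (rad_mem H h2) (fun p hp => (cov_witness H h2 h3 hp).elim fun i h => ⟨i, h.1⟩)⟩
    push_neg at hall
    obtain ⟨iz, hiz⟩ := hall
    -- common machinery for an update of a `none`-disk
    have step : ∀ (i₀ : Fin k) (v : Fin k × E × ℝ) (stn : St k),
        stn = Function.update st i₀ (some v) → st i₀ = none →
        I1 stn → I2 C c1 r1 stn → I3 C c0 r0 P a b stn →
        GM P C (cfg c0 r0 st) (cfg c0 r0 stn) →
        ∃ st', I1 st' ∧ I2 C c1 r1 st' ∧ I3 C c0 r0 P a b st' ∧ (∀ i, st' i ≠ none) ∧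
          GM P C (cfg c0 r0 st) (cfg c0 r0 st') := by
      intro i₀ v stn hdef h0 h1' h2' h3' gstep
      subst hdef
      have hsub : {i | Function.update st i₀ (some v) i = none} ⊆ {i | st i = none} \ {i₀} := by
        intro i hi
        simp only [mem_setOf_eq] at hi
        by_cases e : i = i₀
        · rw [e, Function.update_self] at hi; cases hi
        · rw [Function.update_of_ne e] at hi
          exact ⟨hi, e⟩
      have hlt : ({i | st i = none} \ {i₀}).ncard < {i | st i = none}.ncard :=
        Set.ncard_diff_singleton_lt_of_mem h0 (Set.toFinite _)
      have hcard' : {i | Function.update st i₀ (some v) i = none}.ncard ≤ n := by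
        have := Set.ncard_le_ncard hsub (Set.toFinite _)
        omega
      obtain ⟨st', H1, H2, H3, Hall, g'⟩ := ih (Function.update st i₀ (some v)) h1' h2' h3' hcard'
      exact ⟨st', H1, H2, H3, Hall, GM_trans gstep g'⟩
    by_cases hA : ∃ q, q ∈ P ∧ st (a q) = none ∧ ∀ i x r, st i ≠ some (b q, x, r)
    · -- Case A : slide disk `a q` to the super-position `(q, 2C)` serving position `b q`.
      obtain ⟨q, hqP, hq0, hqfree⟩ := hA
      set st' := Function.update st (a q) (some (b q, q, 2*C)) with hst'def
      have hup : st' (a q) = some (b q, q, 2*C) := by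
        rw [hst'def]; exact Function.update_self _ _ _
      have hne : ∀ i, i ≠ a q → st' i = st i := fun i h => by
        rw [hst'def]; exact Function.update_of_ne h _ _
      have h1' : I1 st' := by
        intro i i' j x r x' r' hi hi'
        by_cases e : i = a q <;> by_cases e' : i' = a q
        · rw [e, e']
        · subst e
          obtain ⟨rfl, rfl, rfl⟩ : b q = j ∧ q = x ∧ 2*C = r := by
            simpa using hup.symm.trans hi
          rw [hne i' e'] at hi'
          exact absurd hi' (hqfree i' x' r')
        · subst e'
          obtain ⟨rfl, rfl, rfl⟩ : b q = j ∧ q = x' ∧ 2*C = r' := by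
            simpa using hup.symm.trans hi'
          rw [hne i e] at hi
          exact absurd hi (hqfree i x r)
        · rw [hne i e] at hi; rw [hne i' e'] at hi'
          exact h1 hi hi'
      have h2' : I2 C c1 r1 st' := by
        intro i j x r hi
        by_cases e : i = a q
        · subst e
          obtain ⟨rfl, rfl, rfl⟩ : b q = j ∧ q = x ∧ 2*C = r := by
            simpa using hup.symm.trans hi
          exact Or.inr ⟨H.hb q hqP, rfl⟩
        · rw [hne i e] at hi; exact h2 hi
      have h3' : I3 C c0 r0 P a b st' := by
        intro p hp
        by_cases hap : a p = a q
        · refine Or.inr (Or.inl ⟨b q, q, ?_, ?_⟩)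
          · rw [hap]; exact hup
          · rw [hap]; exact H.ha q hqP
        · rcases h3 p hp with h | ⟨j, x, hx, hd⟩ | ⟨i, y, r, hi⟩
          · exact Or.inl (by rw [hne (a p) hap]; exact h)
          · exact Or.inr (Or.inl ⟨j, x, by rw [hne (a p) hap]; exact hx, hd⟩)
          · refine Or.inr (Or.inr ⟨i, y, r, ?_⟩)
            have : i ≠ a q := fun e => by rw [e, hq0] at hi; cases hi
            rw [hne i this]; exact hi
      refine step (a q) _ st' hst'def hq0 h1' h2' h3' ?_
      refine GM_linear (rad_mem H h2) (rad_mem H h2') ?_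
      intro p hp
      by_cases hap : a p = a q
      · refine ⟨a q, ?_, ?_⟩
        · simp only [cfg, hq0, Option.elim]
          rw [← hap]; exact H.ha p hp
        · simp only [cfg, hup, Option.elim]
          calc dist p q ≤ dist p (c0 (a q)) + dist (c0 (a q)) q := dist_triangle _ _ _
            _ ≤ r0 (a q) + r0 (a q) := by
                refine add_le_add ?_ (by rw [dist_comm]; exact H.ha q hqP)
                rw [← hap]; exact H.ha p hp
            _ ≤ 2*C := by linarith [H.hB0 (a q)]
      · obtain ⟨i, hcov, hor⟩ := cov_witness H h2 h3 hp
        have hii : i ≠ a q := by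
          rcases hor with rfl | hnn
          · exact hap
          · exact fun e => hnn (by rw [e]; exact hq0)
        have hcfg : cfg c0 r0 st' i = cfg c0 r0 st i := by
          simp only [cfg, hne i hii]
        exact ⟨i, hcov, by rw [hcfg]; exact hcov⟩
    · -- Case B : disk `iz` is released; teleport it straight to a free final position.
      obtain ⟨j₀, hj₀⟩ := exists_unparked hiz
      push_neg at hA
      have hrel : ∀ p ∈ P, a p = iz → ∃ i x r, st i = some (b p, x, r) := by
        intro p hp hap
        exact hA p hp (by rw [hap]; exact hiz)
      set st' := Function.update st iz (some (j₀, c1 j₀, r1 j₀)) with hst'def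
      have hup : st' iz = some (j₀, c1 j₀, r1 j₀) := by
        rw [hst'def]; exact Function.update_self _ _ _
      have hne : ∀ i, i ≠ iz → st' i = st i := fun i h => by
        rw [hst'def]; exact Function.update_of_ne h _ _
      have h1' : I1 st' := by
        intro i i' j x r x' r' hi hi'
        by_cases e : i = iz <;> by_cases e' : i' = iz
        · rw [e, e']
        · subst e
          obtain ⟨rfl, rfl, rfl⟩ : j₀ = j ∧ c1 j₀ = x ∧ r1 j₀ = r := by
            simpa using hup.symm.trans hi
          rw [hne i' e'] at hi'
          exact absurd hi' (hj₀ i' x' r')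
        · subst e'
          obtain ⟨rfl, rfl, rfl⟩ : j₀ = j ∧ c1 j₀ = x' ∧ r1 j₀ = r' := by
            simpa using hup.symm.trans hi'
          rw [hne i e] at hi
          exact absurd hi (hj₀ i x r)
        · rw [hne i e] at hi; rw [hne i' e'] at hi'
          exact h1 hi hi'
      have h2' : I2 C c1 r1 st' := by
        intro i j x r hi
        by_cases e : i = iz
        · subst e
          obtain ⟨rfl, rfl, rfl⟩ : j₀ = j ∧ c1 j₀ = x ∧ r1 j₀ = r := by
            simpa using hup.symm.trans hi
          exact Or.inl ⟨rfl, rfl⟩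
        · rw [hne i e] at hi; exact h2 hi
      have h3' : I3 C c0 r0 P a b st' := by
        intro p hp
        by_cases hap : a p = iz
        · obtain ⟨i, x, r, hi⟩ := hrel p hp hap
          have hiiz : i ≠ iz := fun e => by rw [e, hiz] at hi; cases hi
          exact Or.inr (Or.inr ⟨i, x, r, by rw [hne i hiiz]; exact hi⟩)
        · rcases h3 p hp with h | ⟨j, x, hx, hd⟩ | ⟨i, y, r, hi⟩
          · exact Or.inl (by rw [hne (a p) hap]; exact h)
          · exact Or.inr (Or.inl ⟨j, x, by rw [hne (a p) hap]; exact hx, hd⟩)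
          · have hiiz : i ≠ iz := fun e => by rw [e, hiz] at hi; cases hi
            exact Or.inr (Or.inr ⟨i, y, r, by rw [hne i hiiz]; exact hi⟩)
      refine step iz _ st' hst'def hiz h1' h2' h3' ?_
      refine GM_linear (rad_mem H h2) (rad_mem H h2') ?_
      intro p hp
      by_cases hap : a p = iz
      · obtain ⟨i, x, r, hi⟩ := hrel p hp hap
        have hiiz : i ≠ iz := fun e => by rw [e, hiz] at hi; cases hi
        have hcov : dist p (cfg c0 r0 st i).1 ≤ (cfg c0 r0 st i).2 := by
          simp only [cfg, hi, Option.elim]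
          exact park_covers H h2 hi (H.hb p hp)
        have hcfg : cfg c0 r0 st' i = cfg c0 r0 st i := by
          simp only [cfg, hne i hiiz]
        exact ⟨i, hcov, by rw [hcfg]; exact hcov⟩
      · obtain ⟨i, hcov, hor⟩ := cov_witness H h2 h3 hp
        have hii : i ≠ iz := by
          rcases hor with rfl | hnn
          · exact hap
          · exact fun e => hnn (by rw [e]; exact hiz)
        have hcfg : cfg c0 r0 st' i = cfg c0 r0 st i := by
          simp only [cfg, hne i hii]
        exact ⟨i, hcov, by rw [hcfg]; exact hcov⟩

lemma phase2 (H : Hyp C c0 c1 r0 r1 P a b) :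
    ∀ n (st : St k), I1 st → I2 C c1 r1 st → (∀ i, st i ≠ none) →
      (∀ p ∈ P, ∃ i y r, st i = some (b p, y, r)) →
      {i | ¬ ∃ j, st i = some (j, c1 j, r1 j)}.ncard ≤ n →
      ∃ st', I1 st' ∧ (∀ i, ∃ j, st' i = some (j, c1 j, r1 j)) ∧
        GM P C (cfg c0 r0 st) (cfg c0 r0 st') := by
  intro n
  induction n with
  | zero =>
    intro st h1 h2 hsome h3 hcard
    have hempty : {i | ¬ ∃ j, st i = some (j, c1 j, r1 j)} = ∅ :=
      (Set.ncard_eq_zero (Set.toFinite _)).mp (Nat.le_zero.mp hcard)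
    have hall : ∀ i, ∃ j, st i = some (j, c1 j, r1 j) := by
      intro i
      by_contra hi
      exact absurd (hempty ▸ (hi : i ∈ {i | ¬ ∃ j, st i = some (j, c1 j, r1 j)}) : i ∈ (∅ : Set (Fin k)))
        (Set.notMem_empty i)
    refine ⟨st, h1, hall, GM_refl (rad_mem H h2) ?_⟩
    intro p hp
    obtain ⟨i, y, r, hi⟩ := h3 p hp
    refine ⟨i, ?_⟩
    simp only [cfg, hi, Option.elim]
    exact park_covers H h2 hi (H.hb p hp)
  | succ n ih =>
    intro st h1 h2 hsome h3 hcard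
    by_cases hall : ∀ i, ∃ j, st i = some (j, c1 j, r1 j)
    · refine ⟨st, h1, hall, GM_refl (rad_mem H h2) ?_⟩
      intro p hp
      obtain ⟨i, y, r, hi⟩ := h3 p hp
      refine ⟨i, ?_⟩
      simp only [cfg, hi, Option.elim]
      exact park_covers H h2 hi (H.hb p hp)
    push_neg at hall
    obtain ⟨i₀, hnf0⟩ := hall
    have hnf : ¬ ∃ j, st i₀ = some (j, c1 j, r1 j) := fun ⟨j', hj'⟩ => hnf0 j' hj'
    rcases hi₀ : st i₀ with _ | ⟨⟨j, x, r⟩⟩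
    · exact absurd hi₀ (hsome i₀)
    obtain ⟨hd, rfl⟩ : dist x (c1 j) ≤ r1 j ∧ r = 2*C := by
      rcases h2 hi₀ with ⟨rfl, rfl⟩ | h
      · exact absurd ⟨j, hi₀⟩ hnf
      · exact h
    set st' := Function.update st i₀ (some (j, c1 j, r1 j)) with hst'def
    have hup : st' i₀ = some (j, c1 j, r1 j) := by
      rw [hst'def]; exact Function.update_self _ _ _
    have hne : ∀ i, i ≠ i₀ → st' i = st i := fun i h => by
      rw [hst'def]; exact Function.update_of_ne h _ _
    have h1' : I1 st' := by
      intro i i' j' x' r' x'' r'' hi hi'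
      by_cases e : i = i₀ <;> by_cases e' : i' = i₀
      · rw [e, e']
      · subst e
        obtain ⟨rfl, rfl, rfl⟩ : j = j' ∧ c1 j = x' ∧ r1 j = r' := by
          simpa using hup.symm.trans hi
        rw [hne i' e'] at hi'
        exact h1 hi₀ hi'
      · subst e'
        obtain ⟨rfl, rfl, rfl⟩ : j = j' ∧ c1 j = x'' ∧ r1 j = r'' := by
          simpa using hup.symm.trans hi'
        rw [hne i e] at hi
        exact (h1 hi₀ hi).symm
      · rw [hne i e] at hi; rw [hne i' e'] at hi'
        exact h1 hi hi'
    have h2' : I2 C c1 r1 st' := by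
      intro i j' x' r' hi
      by_cases e : i = i₀
      · subst e
        obtain ⟨rfl, rfl, rfl⟩ : j = j' ∧ c1 j = x' ∧ r1 j = r' := by
          simpa using hup.symm.trans hi
        exact Or.inl ⟨rfl, rfl⟩
      · rw [hne i e] at hi; exact h2 hi
    have hsome' : ∀ i, st' i ≠ none := by
      intro i
      by_cases e : i = i₀
      · rw [e, hup]; exact fun h => by cases h
      · rw [hne i e]; exact hsome i
    have h3' : ∀ p ∈ P, ∃ i y r, st' i = some (b p, y, r) := by
      intro p hp
      obtain ⟨i, y, r, hi⟩ := h3 p hp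
      by_cases e : i = i₀
      · rw [e] at hi
        obtain ⟨rfl, rfl, rfl⟩ : b p = j ∧ y = x ∧ r = 2*C := by
          simpa using hi.symm.trans hi₀
        exact ⟨i₀, c1 (b p), r1 (b p), hup⟩
      · exact ⟨i, y, r, by rw [hne i e]; exact hi⟩
    have hsub : {i | ¬ ∃ j', st' i = some (j', c1 j', r1 j')} ⊆
        {i | ¬ ∃ j', st i = some (j', c1 j', r1 j')} \ {i₀} := by
      intro i hi
      simp only [mem_setOf_eq] at hi
      by_cases e : i = i₀
      · exact absurd ⟨j, by rw [e]; exact hup⟩ hi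
      · exact ⟨fun h => hi (by rw [hne i e]; exact h), e⟩
    have hlt : ({i | ¬ ∃ j', st i = some (j', c1 j', r1 j')} \ {i₀}).ncard <
        {i | ¬ ∃ j', st i = some (j', c1 j', r1 j')}.ncard :=
      Set.ncard_diff_singleton_lt_of_mem hnf (Set.toFinite _)
    have hcard' : {i | ¬ ∃ j', st' i = some (j', c1 j', r1 j')}.ncard ≤ n := by
      have := Set.ncard_le_ncard hsub (Set.toFinite _)
      omega
    obtain ⟨st'', H1, H2, g'⟩ := ih st' h1' h2' hsome' h3' hcard'
    refine ⟨st'', H1, H2, GM_trans ?_ g'⟩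
    refine GM_linear (rad_mem H h2) (rad_mem H h2') ?_
    intro p hp
    obtain ⟨i, y, r, hi⟩ := h3 p hp
    by_cases e : i = i₀
    · rw [e] at hi
      obtain ⟨rfl, rfl, rfl⟩ : b p = j ∧ y = x ∧ r = 2*C := by
        simpa using hi.symm.trans hi₀
      refine ⟨i₀, ?_, ?_⟩
      · simp only [cfg, hi₀, Option.elim]
        calc dist p y ≤ dist p (c1 (b p)) + dist (c1 (b p)) y := dist_triangle _ _ _
          _ ≤ r1 (b p) + r1 (b p) := add_le_add (H.hb p hp) (by rw [dist_comm]; exact hd)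
          _ ≤ 2*C := by linarith [H.hB1 (b p)]
      · simp only [cfg, hup, Option.elim]
        exact H.hb p hp
    · have hcov : dist p (cfg c0 r0 st i).1 ≤ (cfg c0 r0 st i).2 := by
        simp only [cfg, hi, Option.elim]
        exact park_covers H h2 hi (H.hb p hp)
      have hcfg : cfg c0 r0 st' i = cfg c0 r0 st i := by
        simp only [cfg, hne i e]
      exact ⟨i, hcov, by rw [hcfg]; exact hcov⟩

lemma main_GM (H : Hyp C c0 c1 r0 r1 P a b) :
    ∃ σ : Equiv.Perm (Fin k),
      GM P C (fun i => (c0 i, r0 i)) (fun i => (c1 (σ i), r1 (σ i))) := by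
  classical
  have h1₀ : I1 (fun _ => none : St k) := by
    intro i i' j x r x' r' hi _
    cases hi
  have h2₀ : I2 C c1 r1 (fun _ => none : St k) := by
    intro i j x r hi
    cases hi
  have h3₀ : I3 C c0 r0 P a b (fun _ => none : St k) := fun p _ => Or.inl rfl
  have hcard₀ : {i : Fin k | (fun _ => none : St k) i = none}.ncard ≤ k := ncard_le_k _
  obtain ⟨stA, h1A, h2A, h3A, hsomeA, gA⟩ :=
    phase1 H k (fun _ => none) h1₀ h2₀ h3₀ hcard₀
  have hg : ∀ i, ∃ j x r, stA i = some (j, x, r) := by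
    intro i
    rcases h : stA i with _ | ⟨⟨j, x, r⟩⟩
    · exact absurd h (hsomeA i)
    · exact ⟨j, x, r, rfl⟩
  choose g gx gr hgs using hg
  have hginj : Function.Injective g := by
    intro i i' e
    have h := hgs i'
    rw [← e] at h
    exact h1A (hgs i) h
  have hgsurj := Finite.injective_iff_surjective.mp hginj
  have h3p : ∀ p ∈ P, ∃ i y r, stA i = some (b p, y, r) := by
    intro p hp
    obtain ⟨i, hi⟩ := hgsurj (b p)
    exact ⟨i, gx i, gr i, by rw [hgs i, hi]⟩
  have hcardA : {i | ¬ ∃ j, stA i = some (j, c1 j, r1 j)}.ncard ≤ k := ncard_le_k _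
  obtain ⟨stB, h1B, hfinB, gB⟩ := phase2 H k stA h1A h2A hsomeA h3p hcardA
  choose σ₀ hσ₀ using hfinB
  have hσinj : Function.Injective σ₀ := by
    intro i i' e
    have h := hσ₀ i'
    rw [← e] at h
    exact h1B (hσ₀ i) h
  let σ : Equiv.Perm (Fin k) :=
    Equiv.ofBijective σ₀ (Finite.injective_iff_bijective.mp hσinj)
  have e0 : cfg c0 r0 (fun _ => none) = fun i => (c0 i, r0 i) := by
    funext i
    simp only [cfg, Option.elim]
  have e1 : cfg c0 r0 stB = fun i => (c1 (σ i), r1 (σ i)) := by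
    funext i
    have : σ i = σ₀ i := rfl
    rw [this]
    simp only [cfg, hσ₀ i, Option.elim]
  refine ⟨σ, ?_⟩
  rw [← e0, ← e1]
  exact GM_trans gA gB

end Main

end MorphAux

open MorphAux in
theorem minmax_euclidean_morph_factor_two
    (k : ℕ) (hk : 2 ≤ k) (P : Set E) (hP : P.Finite) (C : ℝ) (hC : 0 ≤ C)
    (c0 c1 : Fin k → E) (r0 r1 : Fin k → ℝ)
    (hr0 : ∀ i, 0 ≤ r0 i) (hr1 : ∀ i, 0 ≤ r1 i)
    (h0 : P ⊆ ⋃ i, Metric.closedBall (c0 i) (r0 i))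
    (h1 : P ⊆ ⋃ i, Metric.closedBall (c1 i) (r1 i))
    (hb0 : ∀ i, r0 i ≤ C) (hb1 : ∀ i, r1 i ≤ C) :
    ∃ γ ρ, IsMorph k P c0 c1 r0 r1 γ ρ ∧
      ∀ i, ∀ t ∈ Set.Icc (0:ℝ) 1, ρ i t ≤ 2 * C := by
  classical
  have hk0 : 0 < k := by omega
  have hcov0 : ∀ p ∈ P, ∃ i, dist p (c0 i) ≤ r0 i := by
    intro p hp
    have := h0 hp
    rw [Set.mem_iUnion] at this
    obtain ⟨i, hi⟩ := this
    exact ⟨i, Metric.mem_closedBall.mp hi⟩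
  have hcov1 : ∀ p ∈ P, ∃ i, dist p (c1 i) ≤ r1 i := by
    intro p hp
    have := h1 hp
    rw [Set.mem_iUnion] at this
    obtain ⟨i, hi⟩ := this
    exact ⟨i, Metric.mem_closedBall.mp hi⟩
  obtain ⟨a, ha⟩ : ∃ a : E → Fin k, ∀ p ∈ P, dist p (c0 (a p)) ≤ r0 (a p) := by
    choose f hf using hcov0
    exact ⟨fun p => if hp : p ∈ P then f p hp else ⟨0, hk0⟩,
      fun p hp => by simp only [dif_pos hp]; exact hf p hp⟩
  obtain ⟨b, hb⟩ : ∃ b : E → Fin k, ∀ p ∈ P, dist p (c1 (b p)) ≤ r1 (b p) := by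
    choose f hf using hcov1
    exact ⟨fun p => if hp : p ∈ P then f p hp else ⟨0, hk0⟩,
      fun p hp => by simp only [dif_pos hp]; exact hf p hp⟩
  have H : Hyp C c0 c1 r0 r1 P a b := ⟨hC, hr0, hb0, hr1, hb1, ha, hb⟩
  obtain ⟨σ, hgm⟩ := main_GM H
  rw [GM] at hgm
  obtain ⟨γ, ρ, hγc, hρc, hbnd, hγ0, hρ0, hγ1, hρ1, hcov⟩ := hgm
  refine ⟨γ, ρ, ⟨fun i => (hγc i).continuousOn, fun i => (hρc i).continuousOn,
    fun i t ht => (hbnd i t ht).1, fun i => hγ0 i, fun i => hρ0 i,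
    ⟨σ, fun i => hγ1 i, fun i => hρ1 i⟩, hcov⟩, fun i t ht => (hbnd i t ht).2⟩
end
end

section
/- For every k ≥ 2 there exist a finite point set P ⊆ E = EuclideanSpace ℝ (Fin 2) and two configurations R and B of k disks, each covering P with total radius (sum of radii) equal to 1/2, such that (i) every configuration of k disks covering P has total radius at least 1/2 (R and B are optimal), and (ii) for every continuous morph (γ, ρ) on [0,1] from R to B covering P there exists t ∈ [0,1] with ∑ i, ρ i t ≥ 1. (Hence the topological stability ratio of the minsum Euclidean k-center problem is at least 2 for every k ≥ 2.) -/
open Metric Set Real Pointwise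

noncomputable section

lemma dist_pt (x1 y1 x2 y2 : ℝ) :
    dist (pt x1 y1) (pt x2 y2) = Real.sqrt ((x1-x2)^2 + (y1-y2)^2) := by
  rw [EuclideanSpace.dist_eq]
  simp [pt, Fin.sum_univ_two, Real.dist_eq, sq_abs]

lemma dist_pt_x (x1 y1 x2 y2 : ℝ) : |x1 - x2| ≤ dist (pt x1 y1) (pt x2 y2) := by
  rw [dist_pt, ← Real.sqrt_sq_eq_abs]
  exact Real.sqrt_le_sqrt (by nlinarith [sq_nonneg (y1 - y2)])

lemma dist_pt_y (x1 y1 x2 y2 : ℝ) : |y1 - y2| ≤ dist (pt x1 y1) (pt x2 y2) := by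
  rw [dist_pt, ← Real.sqrt_sq_eq_abs]
  exact Real.sqrt_le_sqrt (by nlinarith [sq_nonneg (x1 - x2)])

lemma dist_pt_vert (a b : ℝ) : dist (pt 0 a) (pt 0 b) = |a - b| := by
  rw [dist_pt, ← Real.sqrt_sq_eq_abs]; norm_num

noncomputable def F (j : ℕ) : E :=
  if j = 0 then pt 0 (-1) else if j = 1 then pt 0 0 else if j = 2 then pt 0 1
  else pt (2*j) 0

lemma F_big {j : ℕ} (h : 3 ≤ j) : F j = pt (2*j) 0 := by
  unfold F; rw [if_neg (by omega), if_neg (by omega), if_neg (by omega)]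

lemma F_pair {a b : ℕ} (h : a < b) :
    2 ≤ dist (F a) (F b) ∨ (a = 0 ∧ b = 1) ∨ (a = 1 ∧ b = 2) := by
  by_cases hb : 3 ≤ b
  · left
    rw [F_big hb]
    by_cases ha : 3 ≤ a
    · rw [F_big ha]
      refine le_trans ?_ (dist_pt_x _ _ _ _)
      have : (a:ℝ) + 1 ≤ (b:ℝ) := by exact_mod_cast h
      rw [abs_sub_comm, abs_of_nonneg (by linarith)]; linarith
    · have ha' : a ≤ 2 := by omega
      have hb' : (6:ℝ) ≤ 2*(b:ℝ) := by
        have : (3:ℝ) ≤ (b:ℝ) := by exact_mod_cast hb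
        linarith
      interval_cases a <;>
        simp only [F] <;> norm_num <;>
        refine le_trans ?_ (dist_pt_x _ _ _ _) <;>
        rw [abs_sub_comm, abs_of_nonneg (by linarith)] <;> linarith
  · interval_cases b <;> interval_cases a
    · right; left; exact ⟨rfl, rfl⟩
    · left
      simp only [F]; norm_num
      refine le_trans ?_ (dist_pt_y _ _ _ _); norm_num
    · right; right; exact ⟨rfl, rfl⟩

lemma F_one {a b : ℕ} (h : a < b) : 1 ≤ dist (F a) (F b) := by
  rcases F_pair h with h2 | ⟨rfl, rfl⟩ | ⟨rfl, rfl⟩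
  · linarith
  · simp only [F]; norm_num
    refine le_trans ?_ (dist_pt_y _ _ _ _); norm_num
  · simp only [F]; norm_num
    refine le_trans ?_ (dist_pt_y _ _ _ _); norm_num

theorem minsum_euclidean_k_center_lower_bound
    (k : ℕ) (hk : 2 ≤ k) :
    ∃ (P : Set E) (_ : P.Finite) (c0 c1 : Fin k → E) (r0 r1 : Fin k → ℝ),
      (∀ i, 0 ≤ r0 i) ∧ (∀ i, 0 ≤ r1 i) ∧
      (P ⊆ ⋃ i, Metric.closedBall (c0 i) (r0 i)) ∧
      (P ⊆ ⋃ i, Metric.closedBall (c1 i) (r1 i)) ∧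
      (∑ i, r0 i) = 1/2 ∧ (∑ i, r1 i) = 1/2 ∧
      (∀ (c : Fin k → E) (r : Fin k → ℝ), (∀ i, 0 ≤ r i) →
        P ⊆ (⋃ i, Metric.closedBall (c i) (r i)) → (1:ℝ)/2 ≤ ∑ i, r i) ∧
      (∀ γ ρ, IsMorph k P c0 c1 r0 r1 γ ρ →
        ∃ t ∈ Set.Icc (0:ℝ) 1, (1:ℝ) ≤ ∑ i, ρ i t) := by
  have hk1 : 0 < k := by omega
  have hk2 : 1 < k := by omega
  set f : Fin (k+1) → E := fun j => F j.val with hf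
  set c0 : Fin k → E := fun i =>
    if i.val = 0 then pt 0 (-(1/2)) else if i.val = 1 then pt 0 1 else pt (2*(i.val+1)) 0 with hc0
  set c1 : Fin k → E := fun i =>
    if i.val = 0 then pt 0 (1/2) else if i.val = 1 then pt 0 (-1) else pt (2*(i.val+1)) 0 with hc1
  set r0 : Fin k → ℝ := fun i => if i.val = 0 then (1/2:ℝ) else 0 with hr0
  have hr0nn : ∀ i, 0 ≤ r0 i := by
    intro i; rw [hr0]; dsimp only; split_ifs <;> norm_num
  have hsum : (∑ i, r0 i) = 1/2 := by
    have he : ∀ i : Fin k, r0 i = if i = ⟨0, hk1⟩ then (1/2:ℝ) else 0 := by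
      intro i; rw [hr0]; dsimp only; congr 1
      simp [Fin.ext_iff]
    rw [Finset.sum_congr rfl (fun i _ => he i)]
    simp
  refine ⟨Set.range f, Set.finite_range f, c0, c1, r0, r0, hr0nn, hr0nn, ?_, ?_, hsum, hsum, ?_, ?_⟩
  · -- coverage by c0
    rintro x ⟨j, rfl⟩
    by_cases h0 : j.val = 0
    · refine mem_iUnion.2 ⟨⟨0, hk1⟩, ?_⟩
      rw [mem_closedBall, hf, hc0, hr0]; dsimp only
      rw [h0]
      norm_num [F, dist_pt_vert, abs_le, le_abs]
    by_cases h1 : j.val = 1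
    · refine mem_iUnion.2 ⟨⟨0, hk1⟩, ?_⟩
      rw [mem_closedBall, hf, hc0, hr0]; dsimp only
      rw [h1]
      norm_num [F, dist_pt_vert, abs_le, le_abs]
    by_cases h2 : j.val = 2
    · refine mem_iUnion.2 ⟨⟨1, hk2⟩, ?_⟩
      rw [mem_closedBall, hf, hc0, hr0]; dsimp only
      rw [h2]
      norm_num [F, dist_pt_vert, abs_le, le_abs]
    · have h3 : 3 ≤ j.val := by omega
      have hjk : j.val - 1 < k := by omega
      refine mem_iUnion.2 ⟨⟨j.val - 1, hjk⟩, ?_⟩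
      rw [mem_closedBall, hf, hc0, hr0]; dsimp only
      rw [if_neg (by omega), if_neg (by omega), if_neg (by omega), F_big h3]
      have : (((j.val - 1 : ℕ)) : ℝ) + 1 = (j.val : ℝ) := by
        have : ((j.val - 1 : ℕ) : ℝ) = (j.val : ℝ) - 1 := by
          push_cast [Nat.cast_sub (by omega : 1 ≤ j.val)]; ring
        rw [this]; ring
      rw [this, dist_self]
  · -- coverage by c1
    rintro x ⟨j, rfl⟩
    by_cases h0 : j.val = 0
    · refine mem_iUnion.2 ⟨⟨1, hk2⟩, ?_⟩
      rw [mem_closedBall, hf, hc1, hr0]; dsimp only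
      rw [h0]
      norm_num [F, dist_pt_vert, abs_le, le_abs]
    by_cases h1 : j.val = 1
    · refine mem_iUnion.2 ⟨⟨0, hk1⟩, ?_⟩
      rw [mem_closedBall, hf, hc1, hr0]; dsimp only
      rw [h1]
      norm_num [F, dist_pt_vert, abs_le, le_abs]
    by_cases h2 : j.val = 2
    · refine mem_iUnion.2 ⟨⟨0, hk1⟩, ?_⟩
      rw [mem_closedBall, hf, hc1, hr0]; dsimp only
      rw [h2]
      norm_num [F, dist_pt_vert, abs_le, le_abs]
    · have h3 : 3 ≤ j.val := by omega
      have hjk : j.val - 1 < k := by omega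
      refine mem_iUnion.2 ⟨⟨j.val - 1, hjk⟩, ?_⟩
      rw [mem_closedBall, hf, hc1, hr0]; dsimp only
      rw [if_neg (by omega), if_neg (by omega), if_neg (by omega), F_big h3]
      have : (((j.val - 1 : ℕ)) : ℝ) + 1 = (j.val : ℝ) := by
        have : ((j.val - 1 : ℕ) : ℝ) = (j.val : ℝ) - 1 := by
          push_cast [Nat.cast_sub (by omega : 1 ≤ j.val)]; ring
        rw [this]; ring
      rw [this, dist_self]
  · -- optimality
    intro c r hr hcov
    have hchoice : ∀ j : Fin (k+1), ∃ i, dist (f j) (c i) ≤ r i := by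
      intro j
      have := hcov ⟨j, rfl⟩
      simpa [mem_iUnion, mem_closedBall] using this
    choose g hg using hchoice
    obtain ⟨a, -, b, -, hab, hgab⟩ := Finset.exists_ne_map_eq_of_card_lt_of_maps_to
      (s := (Finset.univ : Finset (Fin (k+1)))) (t := (Finset.univ : Finset (Fin k)))
      (by simp) (fun j _ => Finset.mem_univ (g j))
    have hd : 1 ≤ dist (f a) (f b) := by
      rcases lt_or_gt_of_ne (fun h => hab (Fin.val_injective h) : a.val ≠ b.val) with h | h
      · exact F_one h
      · rw [hf]; dsimp only; rw [dist_comm]; exact F_one h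
    have htri : dist (f a) (f b) ≤ r (g a) + r (g a) := by
      calc dist (f a) (f b) ≤ dist (f a) (c (g a)) + dist (f b) (c (g a)) :=
            dist_triangle_right _ _ _
        _ ≤ _ := add_le_add (hg a) (by rw [hgab]; exact hg b)
    calc (1:ℝ)/2 ≤ r (g a) := by linarith
      _ ≤ ∑ i, r i := Finset.single_le_sum (fun i _ => hr i) (Finset.mem_univ _)
  · -- morph
    rintro γ ρ ⟨hγc, hρc, hρnn, hγ0, hρi0, ⟨σ, hσγ, hσρ⟩, hcov⟩
    by_contra hcon
    push_neg at hcon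
    have pairbound : ∀ t (i : Fin k) (x y : E), dist x (γ i t) ≤ ρ i t →
        dist y (γ i t) ≤ ρ i t → dist x y ≤ 2 * ρ i t := by
      intro t i x y hx hy
      calc dist x y ≤ dist x (γ i t) + dist y (γ i t) := dist_triangle_right _ _ _
        _ ≤ 2 * ρ i t := by linarith
    have sumbound : ∀ t ∈ Icc (0:ℝ) 1, ∀ i : Fin k, ρ i t ≤ ∑ j, ρ j t := fun t ht i =>
      Finset.single_le_sum (fun j _ => hρnn j t ht) (Finset.mem_univ i)
    set A : Set ℝ := ⋃ i : Fin k,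
      ((Icc (0:ℝ) 1 ∩ (fun t => ρ i t - dist (F 0) (γ i t)) ⁻¹' Ici 0) ∩
       (Icc (0:ℝ) 1 ∩ (fun t => ρ i t - dist (F 1) (γ i t)) ⁻¹' Ici 0)) with hA
    set B : Set ℝ := ⋃ i : Fin k,
      ((Icc (0:ℝ) 1 ∩ (fun t => ρ i t - dist (F 1) (γ i t)) ⁻¹' Ici 0) ∩
       (Icc (0:ℝ) 1 ∩ (fun t => ρ i t - dist (F 2) (γ i t)) ⁻¹' Ici 0)) with hB
    have memA : ∀ t, t ∈ A ↔ ∃ i, t ∈ Icc (0:ℝ) 1 ∧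
        dist (F 0) (γ i t) ≤ ρ i t ∧ dist (F 1) (γ i t) ≤ ρ i t := by
      intro t
      rw [hA]
      constructor
      · intro h
        obtain ⟨i, ⟨⟨ht, h1⟩, ⟨-, h2⟩⟩⟩ := mem_iUnion.1 h
        exact ⟨i, ht, sub_nonneg.1 h1, sub_nonneg.1 h2⟩
      · rintro ⟨i, ht, h1, h2⟩
        exact mem_iUnion.2 ⟨i, ⟨ht, sub_nonneg.2 h1⟩, ⟨ht, sub_nonneg.2 h2⟩⟩
    have memB : ∀ t, t ∈ B ↔ ∃ i, t ∈ Icc (0:ℝ) 1 ∧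
        dist (F 1) (γ i t) ≤ ρ i t ∧ dist (F 2) (γ i t) ≤ ρ i t := by
      intro t
      rw [hB]
      constructor
      · intro h
        obtain ⟨i, ⟨⟨ht, h1⟩, ⟨-, h2⟩⟩⟩ := mem_iUnion.1 h
        exact ⟨i, ht, sub_nonneg.1 h1, sub_nonneg.1 h2⟩
      · rintro ⟨i, ht, h1, h2⟩
        exact mem_iUnion.2 ⟨i, ⟨ht, sub_nonneg.2 h1⟩, ⟨ht, sub_nonneg.2 h2⟩⟩
    have hclosed : ∀ (p : E) (i : Fin k),
        IsClosed (Icc (0:ℝ) 1 ∩ (fun t => ρ i t - dist p (γ i t)) ⁻¹' Ici 0) :=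
      fun p i => ContinuousOn.preimage_isClosed_of_isClosed
        ((hρc i).sub ((continuous_const.dist continuous_id).comp_continuousOn (hγc i))) isClosed_Icc isClosed_Ici
    have hAc : IsClosed A :=
      isClosed_iUnion_of_finite (fun i => (hclosed (F 0) i).inter (hclosed (F 1) i))
    have hBc : IsClosed B :=
      isClosed_iUnion_of_finite (fun i => (hclosed (F 1) i).inter (hclosed (F 2) i))
    have hsub : Icc (0:ℝ) 1 ⊆ A ∪ B := by
      intro t ht
      have hc : ∀ j : Fin (k+1), ∃ i, dist (f j) (γ i t) ≤ ρ i t := by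
        intro j
        simpa [mem_iUnion, mem_closedBall] using hcov t ht ⟨j, rfl⟩
      choose g hg using hc
      obtain ⟨a, -, b, -, hab, hgab⟩ := Finset.exists_ne_map_eq_of_card_lt_of_maps_to
        (s := (Finset.univ : Finset (Fin (k+1)))) (t := (Finset.univ : Finset (Fin k)))
        (by simp) (fun j _ => Finset.mem_univ (g j))
      have main : ∀ a b : Fin (k+1), a.val < b.val → g a = g b → t ∈ A ∪ B := by
        intro a b hab' hgab'
        have h0 : dist (F a.val) (γ (g a) t) ≤ ρ (g a) t := hg a
        have h1 : dist (F b.val) (γ (g a) t) ≤ ρ (g a) t := by rw [hgab']; exact hg b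
        rcases F_pair hab' with h2 | ⟨ha0, hb1⟩ | ⟨ha1, hb2⟩
        · exfalso
          have hpb := pairbound t (g a) (F a.val) (F b.val) h0 h1
          linarith [sumbound t ht (g a), hcon t ht]
        · left
          rw [ha0] at h0; rw [hb1] at h1
          exact (memA t).2 ⟨g a, ht, h0, h1⟩
        · right
          rw [ha1] at h0; rw [hb2] at h1
          exact (memB t).2 ⟨g a, ht, h0, h1⟩
      rcases lt_or_gt_of_ne (fun h => hab (Fin.val_injective h) : a.val ≠ b.val) with h | h
      · exact main a b h hgab
      · exact main b a h hgab.symm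
    have h0A : (0:ℝ) ∈ Icc (0:ℝ) 1 ∩ A := by
      refine ⟨⟨le_refl 0, by norm_num⟩, ?_⟩
      refine (memA 0).2 ⟨⟨0, hk1⟩, ⟨le_refl 0, by norm_num⟩, ?_, ?_⟩ <;>
      · rw [hγ0, hρi0, hc0, hr0]; dsimp only
        norm_num [F, dist_pt_vert, abs_le, le_abs]
    have h1B : (1:ℝ) ∈ Icc (0:ℝ) 1 ∩ B := by
      refine ⟨⟨by norm_num, le_refl 1⟩, ?_⟩
      refine (memB 1).2 ⟨σ.symm ⟨0, hk1⟩, ⟨by norm_num, le_refl 1⟩, ?_, ?_⟩ <;>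
      · rw [hσγ, hσρ, Equiv.apply_symm_apply, hc1, hr0]; dsimp only
        norm_num [F, dist_pt_vert, abs_le, le_abs]
    obtain ⟨t, ht, hA', hB'⟩ := (isPreconnected_closed_iff.1 isPreconnected_Icc) A B hAc hBc
      hsub ⟨0, h0A⟩ ⟨1, h1B⟩
    obtain ⟨i, -, hi0, hi1⟩ := (memA t).1 hA'
    obtain ⟨i', -, hi1', hi2'⟩ := (memB t).1 hB'
    by_cases hii : i = i'
    · subst hii
      have hpb := pairbound t i (F 0) (F 2) hi0 hi2'
      have h2 : (2:ℝ) ≤ dist (F 0) (F 2) := by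
        norm_num [F, dist_pt_vert, abs_le, le_abs]
      linarith [sumbound t ht i, hcon t ht]
    · have d01 : (1:ℝ) ≤ dist (F 0) (F 1) := F_one (by norm_num)
      have d12 : (1:ℝ) ≤ dist (F 1) (F 2) := F_one (by norm_num)
      have hri : 1/2 ≤ ρ i t := by linarith [pairbound t i (F 0) (F 1) hi0 hi1]
      have hri' : 1/2 ≤ ρ i' t := by linarith [pairbound t i' (F 1) (F 2) hi1' hi2']
      have hpair : ∑ j ∈ ({i, i'} : Finset (Fin k)), ρ j t = ρ i t + ρ i' t :=
        Finset.sum_pair hii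
      have hmono : ∑ j ∈ ({i, i'} : Finset (Fin k)), ρ j t ≤ ∑ j, ρ j t :=
        Finset.sum_le_sum_of_subset_of_nonneg (Finset.subset_univ _)
          (fun j _ _ => hρnn j t ht)
      linarith [hcon t ht]
end
end

section
/- Let E = EuclideanSpace ℝ (Fin 2) and let P₄ = {(1,0), (0,1), (−1,0), (0,−1)} ⊆ E be the vertex set of a square inscribed in the unit circle. Let R be the configuration of 2 disks of radius √2/2 centered at the midpoints of the pairs {(1,0),(0,1)} and {(−1,0),(0,−1)}, and let B be the configuration of 2 disks of radius √2/2 centered at the midpoints of the pairs {(0,1),(−1,0)} and {(0,−1),(1,0)}; both cover P₄ and are optimal. Then for every continuous morph (γ, ρ) on [0,1] from R to B covering P₄, there exist t ∈ [0,1] and i ∈ Fin 2 with ρ i t ≥ 1 = √2 · (√2/2). (This is the lower-bound half of the theorem that the topological stability ratio of the minmax Euclidean 2-center problem equals √2.) -/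
open Metric Set Real Pointwise

noncomputable section

lemma midpt (a b c d : ℝ) : midpoint ℝ (pt a b) (pt c d) = pt ((a+c)/2) ((b+d)/2) := by
  rw [midpoint_eq_smul_add]
  ext i
  fin_cases i <;> simp [pt] <;> ring

lemma dist_pt_pt (a b c d : ℝ) : dist (pt a b) (pt c d) = Real.sqrt ((a-c)^2+(b-d)^2) := by
  rw [EuclideanSpace.dist_eq]
  simp [pt, Fin.sum_univ_two, Real.dist_eq, sq_abs]

lemma sqrt_half : Real.sqrt (1/2 : ℝ) = Real.sqrt 2 / 2 := by
  have h : ((Real.sqrt 2)/2)^2 = 1/2 := by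
    rw [div_pow, Real.sq_sqrt (by norm_num : (0:ℝ) ≤ 2)]; norm_num
  rw [← h, Real.sqrt_sq (by positivity)]

lemma dist_pt_mid_eq (a b c d e f : ℝ)
    (h : (a - (c+e)/2)^2 + (b - (d+f)/2)^2 = 1/2) :
    dist (pt a b) (midpoint ℝ (pt c d) (pt e f)) = Real.sqrt 2 / 2 := by
  rw [midpt, dist_pt_pt, h, sqrt_half]

lemma dist_pt_mid_gt (a b c d e f : ℝ)
    (h : 1/2 < (a - (c+e)/2)^2 + (b - (d+f)/2)^2) :
    Real.sqrt 2 / 2 < dist (pt a b) (midpoint ℝ (pt c d) (pt e f)) := by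
  rw [midpt, dist_pt_pt, ← sqrt_half]
  exact Real.sqrt_lt_sqrt (by norm_num) h

theorem minmax_euclidean_two_center_lower_bound
    (γ : Fin 2 → ℝ → E) (ρ : Fin 2 → ℝ → ℝ)
    (h : IsMorph 2 ({pt 1 0, pt 0 1, pt (-1) 0, pt 0 (-1)} : Set E)
      ![midpoint ℝ (pt 1 0) (pt 0 1), midpoint ℝ (pt (-1) 0) (pt 0 (-1))]
      ![midpoint ℝ (pt 0 1) (pt (-1) 0), midpoint ℝ (pt 0 (-1)) (pt 1 0)]
      (fun _ => Real.sqrt 2 / 2) (fun _ => Real.sqrt 2 / 2) γ ρ) :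
    ∃ t ∈ Set.Icc (0:ℝ) 1, ∃ i, (1:ℝ) ≤ ρ i t := by
  obtain ⟨hγc, hρc, hρnn, hc0, hr0, ⟨σ, hσc, hσr⟩, hcov⟩ := h
  by_contra hcon
  push_neg at hcon
  set P : Set E := {pt 1 0, pt 0 1, pt (-1) 0, pt 0 (-1)} with hP
  have hp1 : pt 1 0 ∈ P := by simp [hP]
  have hp2 : pt 0 1 ∈ P := by simp [hP]
  have hp3 : pt (-1) 0 ∈ P := by simp [hP]
  have hp4 : pt 0 (-1) ∈ P := by simp [hP]
  -- extract cover as existence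
  have hcov' : ∀ t ∈ Set.Icc (0:ℝ) 1, ∀ p ∈ P, ∃ i : Fin 2, dist p (γ i t) ≤ ρ i t := by
    intro t ht p hp
    have hm := hcov t ht hp
    rw [Set.mem_iUnion] at hm
    obtain ⟨i, hi⟩ := hm
    exact ⟨i, by simpa [Metric.mem_closedBall] using hi⟩
  -- exclusivity: a point at distance 2 from another point of P can't be in both balls
  have excl : ∀ t ∈ Set.Icc (0:ℝ) 1, ∀ p ∈ P, ∀ q ∈ P, dist p q = 2 →
      ¬ (dist p (γ 0 t) ≤ ρ 0 t ∧ dist p (γ 1 t) ≤ ρ 1 t) := by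
    rintro t ht p hp q hq hpq ⟨h0, h1⟩
    obtain ⟨i, hi⟩ := hcov' t ht q hq
    have hlt : ρ i t < 1 := hcon t ht i
    have htri : dist p q ≤ dist p (γ i t) + dist q (γ i t) := dist_triangle_right _ _ _
    have hfin : ∀ x : Fin 2, x = 0 ∨ x = 1 := by decide
    rcases hfin i with hi0 | hi0 <;> rw [hi0] at hi htri hlt <;> linarith
  -- the sign function never vanishes
  have gne : ∀ t ∈ Set.Icc (0:ℝ) 1, ∀ p ∈ P, ∀ q ∈ P, dist p q = 2 →
      (dist p (γ 0 t) - ρ 0 t) - (dist p (γ 1 t) - ρ 1 t) ≠ 0 := by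
    intro t ht p hp q hq hpq heq
    obtain ⟨i, hi⟩ := hcov' t ht p hp
    apply excl t ht p hp q hq hpq
    have heq' : dist p (γ 0 t) - ρ 0 t = dist p (γ 1 t) - ρ 1 t := by linarith [sub_eq_zero.mp heq]
    have hfin : ∀ x : Fin 2, x = 0 ∨ x = 1 := by decide
    rcases hfin i with hi0 | hi0 <;> rw [hi0] at hi
    · exact ⟨hi, by linarith⟩
    · exact ⟨by linarith, hi⟩
  -- the product function
  set G : ℝ → ℝ := fun t =>
    ((dist (pt 1 0) (γ 0 t) - ρ 0 t) - (dist (pt 1 0) (γ 1 t) - ρ 1 t)) *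
    ((dist (pt 0 1) (γ 0 t) - ρ 0 t) - (dist (pt 0 1) (γ 1 t) - ρ 1 t)) with hGdef
  have hdc : ∀ (c : E) (i : Fin 2), ContinuousOn (fun t => dist c (γ i t)) (Set.Icc (0:ℝ) 1) :=
    fun c i => continuous_dist.comp_continuousOn (f := fun t => (c, γ i t)) (continuousOn_const.prodMk (hγc i))
  have hGc : ContinuousOn G (Set.Icc 0 1) :=
    (((hdc _ 0).sub (hρc 0)).sub ((hdc _ 1).sub (hρc 1))).mul
    (((hdc _ 0).sub (hρc 0)).sub ((hdc _ 1).sub (hρc 1)))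
  -- endpoint values
  have hγ00 : γ 0 0 = midpoint ℝ (pt 1 0) (pt 0 1) := by simpa using hc0 0
  have hγ10 : γ 1 0 = midpoint ℝ (pt (-1) 0) (pt 0 (-1)) := by simpa using hc0 1
  have hρ00 : ρ 0 0 = Real.sqrt 2 / 2 := hr0 0
  have hρ10 : ρ 1 0 = Real.sqrt 2 / 2 := hr0 1
  have e1 : dist (pt 1 0) (midpoint ℝ (pt 1 0) (pt 0 1)) = Real.sqrt 2 / 2 :=
    dist_pt_mid_eq _ _ _ _ _ _ (by norm_num)
  have e2 : Real.sqrt 2 / 2 < dist (pt 1 0) (midpoint ℝ (pt (-1) 0) (pt 0 (-1))) :=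
    dist_pt_mid_gt _ _ _ _ _ _ (by norm_num)
  have e3 : dist (pt 0 1) (midpoint ℝ (pt 1 0) (pt 0 1)) = Real.sqrt 2 / 2 :=
    dist_pt_mid_eq _ _ _ _ _ _ (by norm_num)
  have e4 : Real.sqrt 2 / 2 < dist (pt 0 1) (midpoint ℝ (pt (-1) 0) (pt 0 (-1))) :=
    dist_pt_mid_gt _ _ _ _ _ _ (by norm_num)
  have e5 : Real.sqrt 2 / 2 < dist (pt 1 0) (midpoint ℝ (pt 0 1) (pt (-1) 0)) :=
    dist_pt_mid_gt _ _ _ _ _ _ (by norm_num)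
  have e6 : dist (pt 1 0) (midpoint ℝ (pt 0 (-1)) (pt 1 0)) = Real.sqrt 2 / 2 :=
    dist_pt_mid_eq _ _ _ _ _ _ (by norm_num)
  have e7 : dist (pt 0 1) (midpoint ℝ (pt 0 1) (pt (-1) 0)) = Real.sqrt 2 / 2 :=
    dist_pt_mid_eq _ _ _ _ _ _ (by norm_num)
  have e8 : Real.sqrt 2 / 2 < dist (pt 0 1) (midpoint ℝ (pt 0 (-1)) (pt 1 0)) :=
    dist_pt_mid_gt _ _ _ _ _ _ (by norm_num)
  have hG0 : 0 < G 0 := by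
    simp only [hGdef, hγ00, hγ10, hρ00, hρ10, e1, e3]
    nlinarith [e2, e4]
  have hG1 : G 1 < 0 := by
    have hρ01 : ρ 0 1 = Real.sqrt 2 / 2 := by rw [hσr 0]
    have hρ11 : ρ 1 1 = Real.sqrt 2 / 2 := by rw [hσr 1]
    have hfin : ∀ x : Fin 2, x = 0 ∨ x = 1 := by decide
    have hc0' := hσc 0
    have hc1' := hσc 1
    rcases hfin (σ 0) with h0 | h0
    · have h1 : σ 1 = 1 := by
        rcases hfin (σ 1) with h1 | h1
        · exact absurd (σ.injective (h1.trans h0.symm)) (by decide)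
        · exact h1
      rw [h0] at hc0'; rw [h1] at hc1'
      simp only [Matrix.cons_val_zero, Matrix.cons_val_one, Matrix.head_cons] at hc0' hc1'
      simp only [hGdef, hc0', hc1', hρ01, hρ11, e6, e7]
      nlinarith [e5, e8]
    · have h1 : σ 1 = 0 := by
        rcases hfin (σ 1) with h1 | h1
        · exact h1
        · exact absurd (σ.injective (h1.trans h0.symm)) (by decide)
      rw [h0] at hc0'; rw [h1] at hc1'
      simp only [Matrix.cons_val_zero, Matrix.cons_val_one, Matrix.head_cons] at hc0' hc1'
      simp only [hGdef, hc0', hc1', hρ01, hρ11, e6, e7]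
      nlinarith [e5, e8]
  -- IVT
  have hmem : (0:ℝ) ∈ Set.Icc (G 1) (G 0) := ⟨hG1.le, hG0.le⟩
  obtain ⟨t, ht, hGt⟩ := intermediate_value_Icc' zero_le_one hGc hmem
  have d13 : dist (pt 1 0) (pt (-1) 0) = 2 := by
    rw [dist_pt_pt]
    rw [show ((1:ℝ)-(-1))^2+((0:ℝ)-0)^2 = 2^2 by norm_num]
    exact Real.sqrt_sq (by norm_num)
  have d24 : dist (pt 0 1) (pt 0 (-1)) = 2 := by
    rw [dist_pt_pt]
    rw [show ((0:ℝ)-0)^2+((1:ℝ)-(-1))^2 = 2^2 by norm_num]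
    exact Real.sqrt_sq (by norm_num)
  rcases mul_eq_zero.mp hGt with hz | hz
  · exact gne t ht (pt 1 0) hp1 (pt (-1) 0) hp3 d13 hz
  · exact gne t ht (pt 0 1) hp2 (pt 0 (-1)) hp4 d24 hz
end
end
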